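/- arXiv:math/0409054 — 2 statements merged into one kernel-verified Lean document; each statement's English description precedes it below -/
import Mathlib

section
/- In the degree-1 integral homology of the 3x3 chessboard complex M_{3,3}, the relation 3·(α_{1,1',2'} ∧ β_{2,3,3'}) = -u_{2,3,1',2',3'} - v_{1,2,3,1',2'} - 2(v_{1,2,3,2',3'} + u_{1,2,1',2',3'}) holds among homology classes. -/
/-!
STATEMENT 3: In ˜H_1(M_{3,3};ℤ), the relation
3·(α_{1,1',2'} ∧ β_{2,3,3'}) = -u_{2,3,1',2',3'} - v_{1,2,3,1',2'} - 2(v_{1,2,3,2',3'} + u_{1,2,1',2',3'})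
holds among homology classes; equivalently the 1-cycle
3·(α_{1,1',2'} ∧ β_{2,3,3'}) + u_{2,3,1',2',3'} + v_{1,2,3,1',2'} + 2(v_{1,2,3,2',3'} + u_{1,2,1',2',3'})
is the boundary of a 2-chain of the chessboard complex M_{3,3}.

Chains are modelled on the oriented simplicial chain complex with canonical
basis the strictly sorted lists of vertices (pairs (row, column) ordered
lexicographically); ∧ re-sorts concatenations with the sign of the permutation.
-/

abbrev V : Type := ℕ × ℕ

abbrev Ch : Type := List V →₀ ℤ

def vlt (p q : V) : Prop := p.1 < q.1 ∨ (p.1 = q.1 ∧ p.2 < q.2)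

instance : DecidableRel vlt := fun p q => by unfold vlt; infer_instance

def vle (p q : V) : Prop := p = q ∨ vlt p q

instance : DecidableRel vle := fun p q => by unfold vle; infer_instance

def inversions (l l' : List V) : ℕ :=
  (l.map fun x => l'.countP fun y => decide (vlt y x)).sum

noncomputable def wedge (c d : Ch) : Ch :=
  c.sum fun l m => d.sum fun l' m' =>
    Finsupp.single (List.insertionSort vle (l ++ l')) ((-1 : ℤ) ^ (inversions l l') * m * m')

infixl:70 " ⋏ " => wedge

noncomputable def bd (c : Ch) : Ch :=
  c.sum fun l m => (Finset.range l.length).sum fun i =>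
    Finsupp.single (l.eraseIdx i) (m * (-1 : ℤ) ^ i)

noncomputable def pt (i j : ℕ) : Ch := Finsupp.single [((i, j) : V)] 1

noncomputable def u (i₁ i₂ j₁ j₂ j₃ : ℕ) : Ch :=
  pt i₁ j₁ ⋏ pt i₂ j₂ + pt i₂ j₂ ⋏ pt i₁ j₃ + pt i₁ j₃ ⋏ pt i₂ j₁ +
    pt i₂ j₁ ⋏ pt i₁ j₂ + pt i₁ j₂ ⋏ pt i₂ j₃ + pt i₂ j₃ ⋏ pt i₁ j₁

noncomputable def v (i₁ i₂ i₃ j₁ j₂ : ℕ) : Ch :=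
  pt i₁ j₁ ⋏ pt i₂ j₂ + pt i₂ j₂ ⋏ pt i₃ j₁ + pt i₃ j₁ ⋏ pt i₁ j₂ +
    pt i₁ j₂ ⋏ pt i₂ j₁ + pt i₂ j₁ ⋏ pt i₃ j₂ + pt i₃ j₂ ⋏ pt i₁ j₁

noncomputable def α (i j k : ℕ) : Ch := pt i j - pt i k

noncomputable def β (i j k : ℕ) : Ch := pt i k - pt j k

/-- `l` is a canonical oriented 2-simplex of M_{3,3}: a strictly sorted list of
three cells of the 3×3 board with pairwise distinct rows and columns. -/
def IsTriangleM33 (l : List V) : Prop :=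
  l.Pairwise vlt ∧ l.length = 3 ∧
    (∀ p ∈ l, p.1 ∈ ({1, 2, 3} : Finset ℕ) ∧ p.2 ∈ ({1, 2, 3} : Finset ℕ)) ∧
    l.Pairwise fun p q => p.1 ≠ q.1 ∧ p.2 ≠ q.2



lemma wedge_single (l l' : List V) (m m' : ℤ) :
    (Finsupp.single l m) ⋏ (Finsupp.single l' m') =
      Finsupp.single (List.insertionSort vle (l ++ l')) ((-1 : ℤ) ^ (inversions l l') * m * m') := by
  unfold wedge
  rw [Finsupp.sum_single_index, Finsupp.sum_single_index] <;>
    simp only [mul_zero, zero_mul, Finsupp.single_zero, Finsupp.sum, Finset.sum_const_zero]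

lemma wedge_add_left (c c' d : Ch) : (c + c') ⋏ d = c ⋏ d + c' ⋏ d := by
  unfold wedge
  rw [Finsupp.sum_add_index]
  · exact fun a _ => by simp only [mul_zero, zero_mul, Finsupp.single_zero, Finsupp.sum, Finset.sum_const_zero]
  · intro a _ b₁ b₂
    rw [← Finsupp.sum_add]
    congr 1; ext l' m'
    rw [← Finsupp.single_add]
    congr 1; ring_nf

lemma wedge_add_right (c d d' : Ch) : c ⋏ (d + d') = c ⋏ d + c ⋏ d' := by
  unfold wedge
  rw [← Finsupp.sum_add]
  congr 1; ext l m
  rw [Finsupp.sum_add_index]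
  · exact fun a _ => by simp only [mul_zero, Finsupp.single_zero]
  · intro a _ b₁ b₂
    rw [← Finsupp.single_add]
    congr 1; ring_nf

lemma wedge_zero_left (d : Ch) : (0 : Ch) ⋏ d = 0 := by
  unfold wedge; exact Finsupp.sum_zero_index

lemma wedge_zero_right (c : Ch) : c ⋏ (0 : Ch) = 0 := by
  unfold wedge
  simp only [Finsupp.sum_zero_index]
  exact Finset.sum_const_zero

noncomputable def wedgeHomL (d : Ch) : Ch →+ Ch :=
  AddMonoidHom.mk' (fun c => c ⋏ d) (fun a b => wedge_add_left a b d)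

noncomputable def wedgeHomR (c : Ch) : Ch →+ Ch :=
  AddMonoidHom.mk' (fun d => c ⋏ d) (fun a b => wedge_add_right c a b)

lemma wedge_sub_left (c c' d : Ch) : (c - c') ⋏ d = c ⋏ d - c' ⋏ d :=
  (wedgeHomL d).map_sub c c'

lemma wedge_sub_right (c d d' : Ch) : c ⋏ (d - d') = c ⋏ d - c ⋏ d' :=
  (wedgeHomR c).map_sub d d'

lemma bd_single3 (a b c : V) (m : ℤ) :
    bd (Finsupp.single [a, b, c] m) =
      Finsupp.single [b, c] m - Finsupp.single [a, c] m + Finsupp.single [a, b] m := by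
  unfold bd
  rw [Finsupp.sum_single_index]
  · show (Finset.range 3).sum _ = _
    rw [Finset.sum_range_succ, Finset.sum_range_succ, Finset.sum_range_one]
    norm_num [List.eraseIdx, pow_succ, Finsupp.single_neg]
    abel
  · simp only [zero_mul, Finsupp.single_zero, Finset.sum_const_zero]

lemma bd_add (x y : Ch) : bd (x + y) = bd x + bd y := by
  unfold bd
  rw [Finsupp.sum_add_index]
  · intro a _
    simp only [zero_mul, Finsupp.single_zero, Finset.sum_const_zero]
  · intro a _ b₁ b₂
    rw [← Finset.sum_add_distrib]
    refine Finset.sum_congr rfl fun i _ => ?_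
    rw [← Finsupp.single_add, add_mul]

noncomputable def bdHom : Ch →+ Ch := AddMonoidHom.mk' bd bd_add

lemma bd_sub (x y : Ch) : bd (x - y) = bd x - bd y := bdHom.map_sub x y

lemma bd_smul (k : ℤ) (x : Ch) : bd (k • x) = k • bd x := by
  unfold bd
  rw [Finsupp.sum_smul_index' (fun i => by
    simp only [zero_mul, Finsupp.single_zero, Finset.sum_const_zero]), Finsupp.smul_sum]
  refine Finsupp.sum_congr fun l _ => ?_
  rw [Finset.smul_sum]
  refine Finset.sum_congr rfl fun i _ => ?_
  rw [Finsupp.smul_single, smul_eq_mul, smul_eq_mul, mul_assoc]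


theorem torsion_relation_in_H1_M33 :
    ∃ c : Ch, (∀ l ∈ c.support, IsTriangleM33 l) ∧
      bd c = 3 • (α 1 1 2 ⋏ β 2 3 3) + u 2 3 1 2 3 + v 1 2 3 1 2 +
        2 • (v 1 2 3 2 3 + u 1 2 1 2 3) := by

  refine ⟨(3 : ℤ) • Finsupp.single [((1:ℕ),(1:ℕ)), (2,2), (3,3)] (1 : ℤ)
      + Finsupp.single [((1:ℕ),(1:ℕ)), (2,3), (3,2)] (1 : ℤ)
      - Finsupp.single [((1:ℕ),(2:ℕ)), (2,1), (3,3)] (1 : ℤ)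
      + Finsupp.single [((1:ℕ),(2:ℕ)), (2,3), (3,1)] (1 : ℤ)
      + (2 : ℤ) • Finsupp.single [((1:ℕ),(3:ℕ)), (2,1), (3,2)] (1 : ℤ), ?_, ?_⟩
  · intro l hl
    have hc := Finsupp.mem_support_iff.mp hl
    simp only [Finsupp.add_apply, Finsupp.sub_apply, Finsupp.smul_apply,
      Finsupp.single_apply, smul_eq_mul] at hc
    split_ifs at hc <;> first
      | (subst_vars; unfold IsTriangleM33; refine ⟨?_, ?_, ?_, ?_⟩ <;> decide)
      | simp at hc
  · rw [bd_add, bd_add, bd_sub, bd_add, bd_smul, bd_smul,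
      bd_single3, bd_single3, bd_single3, bd_single3, bd_single3]
    simp only [u, v, α, β, wedge_sub_left, wedge_sub_right, pt, wedge_single]
    simp only [
    show List.insertionSort vle ([((1:ℕ),(1:ℕ))] ++ [((2:ℕ),(2:ℕ))]) = [(1,1),(2,2)] by decide,
    show inversions [((1:ℕ),(1:ℕ))] [((2:ℕ),(2:ℕ))] = 0 by decide,
    show List.insertionSort vle ([((1:ℕ),(1:ℕ))] ++ [((2:ℕ),(3:ℕ))]) = [(1,1),(2,3)] by decide,
    show inversions [((1:ℕ),(1:ℕ))] [((2:ℕ),(3:ℕ))] = 0 by decide,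
    show List.insertionSort vle ([((1:ℕ),(1:ℕ))] ++ [((3:ℕ),(3:ℕ))]) = [(1,1),(3,3)] by decide,
    show inversions [((1:ℕ),(1:ℕ))] [((3:ℕ),(3:ℕ))] = 0 by decide,
    show List.insertionSort vle ([((1:ℕ),(2:ℕ))] ++ [((2:ℕ),(1:ℕ))]) = [(1,2),(2,1)] by decide,
    show inversions [((1:ℕ),(2:ℕ))] [((2:ℕ),(1:ℕ))] = 0 by decide,
    show List.insertionSort vle ([((1:ℕ),(2:ℕ))] ++ [((2:ℕ),(3:ℕ))]) = [(1,2),(2,3)] by decide,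
    show inversions [((1:ℕ),(2:ℕ))] [((2:ℕ),(3:ℕ))] = 0 by decide,
    show List.insertionSort vle ([((1:ℕ),(2:ℕ))] ++ [((3:ℕ),(3:ℕ))]) = [(1,2),(3,3)] by decide,
    show inversions [((1:ℕ),(2:ℕ))] [((3:ℕ),(3:ℕ))] = 0 by decide,
    show List.insertionSort vle ([((1:ℕ),(3:ℕ))] ++ [((2:ℕ),(1:ℕ))]) = [(1,3),(2,1)] by decide,
    show inversions [((1:ℕ),(3:ℕ))] [((2:ℕ),(1:ℕ))] = 0 by decide,
    show List.insertionSort vle ([((1:ℕ),(3:ℕ))] ++ [((2:ℕ),(2:ℕ))]) = [(1,3),(2,2)] by decide,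
    show inversions [((1:ℕ),(3:ℕ))] [((2:ℕ),(2:ℕ))] = 0 by decide,
    show List.insertionSort vle ([((2:ℕ),(1:ℕ))] ++ [((1:ℕ),(2:ℕ))]) = [(1,2),(2,1)] by decide,
    show inversions [((2:ℕ),(1:ℕ))] [((1:ℕ),(2:ℕ))] = 1 by decide,
    show List.insertionSort vle ([((2:ℕ),(1:ℕ))] ++ [((3:ℕ),(2:ℕ))]) = [(2,1),(3,2)] by decide,
    show inversions [((2:ℕ),(1:ℕ))] [((3:ℕ),(2:ℕ))] = 0 by decide,
    show List.insertionSort vle ([((2:ℕ),(2:ℕ))] ++ [((1:ℕ),(3:ℕ))]) = [(1,3),(2,2)] by decide,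
    show inversions [((2:ℕ),(2:ℕ))] [((1:ℕ),(3:ℕ))] = 1 by decide,
    show List.insertionSort vle ([((2:ℕ),(2:ℕ))] ++ [((3:ℕ),(1:ℕ))]) = [(2,2),(3,1)] by decide,
    show inversions [((2:ℕ),(2:ℕ))] [((3:ℕ),(1:ℕ))] = 0 by decide,
    show List.insertionSort vle ([((2:ℕ),(2:ℕ))] ++ [((3:ℕ),(3:ℕ))]) = [(2,2),(3,3)] by decide,
    show inversions [((2:ℕ),(2:ℕ))] [((3:ℕ),(3:ℕ))] = 0 by decide,
    show List.insertionSort vle ([((2:ℕ),(3:ℕ))] ++ [((1:ℕ),(1:ℕ))]) = [(1,1),(2,3)] by decide,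
    show inversions [((2:ℕ),(3:ℕ))] [((1:ℕ),(1:ℕ))] = 1 by decide,
    show List.insertionSort vle ([((2:ℕ),(3:ℕ))] ++ [((3:ℕ),(1:ℕ))]) = [(2,3),(3,1)] by decide,
    show inversions [((2:ℕ),(3:ℕ))] [((3:ℕ),(1:ℕ))] = 0 by decide,
    show List.insertionSort vle ([((2:ℕ),(3:ℕ))] ++ [((3:ℕ),(2:ℕ))]) = [(2,3),(3,2)] by decide,
    show inversions [((2:ℕ),(3:ℕ))] [((3:ℕ),(2:ℕ))] = 0 by decide,
    show List.insertionSort vle ([((3:ℕ),(1:ℕ))] ++ [((1:ℕ),(2:ℕ))]) = [(1,2),(3,1)] by decide,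
    show inversions [((3:ℕ),(1:ℕ))] [((1:ℕ),(2:ℕ))] = 1 by decide,
    show List.insertionSort vle ([((3:ℕ),(1:ℕ))] ++ [((2:ℕ),(2:ℕ))]) = [(2,2),(3,1)] by decide,
    show inversions [((3:ℕ),(1:ℕ))] [((2:ℕ),(2:ℕ))] = 1 by decide,
    show List.insertionSort vle ([((3:ℕ),(2:ℕ))] ++ [((1:ℕ),(1:ℕ))]) = [(1,1),(3,2)] by decide,
    show inversions [((3:ℕ),(2:ℕ))] [((1:ℕ),(1:ℕ))] = 1 by decide,
    show List.insertionSort vle ([((3:ℕ),(2:ℕ))] ++ [((1:ℕ),(3:ℕ))]) = [(1,3),(3,2)] by decide,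
    show inversions [((3:ℕ),(2:ℕ))] [((1:ℕ),(3:ℕ))] = 1 by decide,
    show List.insertionSort vle ([((3:ℕ),(2:ℕ))] ++ [((2:ℕ),(3:ℕ))]) = [(2,3),(3,2)] by decide,
    show inversions [((3:ℕ),(2:ℕ))] [((2:ℕ),(3:ℕ))] = 1 by decide,
    show List.insertionSort vle ([((3:ℕ),(3:ℕ))] ++ [((1:ℕ),(2:ℕ))]) = [(1,2),(3,3)] by decide,
    show inversions [((3:ℕ),(3:ℕ))] [((1:ℕ),(2:ℕ))] = 1 by decide,
    show List.insertionSort vle ([((3:ℕ),(3:ℕ))] ++ [((2:ℕ),(1:ℕ))]) = [(2,1),(3,3)] by decide,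
    show inversions [((3:ℕ),(3:ℕ))] [((2:ℕ),(1:ℕ))] = 1 by decide,
    ]
    norm_num [Finsupp.single_neg, -Finsupp.smul_single]
    abel
end

section
/- For n ≡ 0 mod 3, the number of matchings G on vertex set [n] whose associated partition λ(G) (from the recursive block decomposition) equals (3,3,…,3) is c_n = 2^{n/3} · ∏_{j=1}^{n/3} (n - 3j + 1). -/
/-!
STATEMENT 8: For n ≡ 0 mod 3, the number of matchings G on vertex set [n] whose
block-decomposition partition λ(G) is (3,3,…,3) equals
c_n = 2^{n/3} · ∏_{j=1}^{n/3} (n - 3j + 1).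

A matching is encoded as a set E of 2-element subsets of Fin n that are pairwise
disjoint.  The block decomposition is computed recursively: if one uncovered
vertex t remains, the final block is {t}; otherwise the two smallest uncovered
vertices a < b together with their neighbours form the next block.  λ(G) is the
multiset of block sizes.
-/

/-- neighbours of `a` in the graph with edge set `E` -/
def nbrs {n : ℕ} (E : Finset (Finset (Fin n))) (a : Fin n) : Finset (Fin n) :=
  Finset.univ.filter fun b => b ≠ a ∧ ∃ e ∈ E, a ∈ e ∧ b ∈ e

/-- the block decomposition of the graph with edge set `E`, starting from the
set `s` of uncovered vertices (with enough `fuel`, e.g. `fuel = n`): the list of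
pairs (block vertex set, block edge set) -/
def blocks {n : ℕ} (E : Finset (Finset (Fin n))) :
    ℕ → Finset (Fin n) → List (Finset (Fin n) × Finset (Finset (Fin n)))
  | 0, _ => []
  | fuel + 1, s =>
    if h : s.Nonempty then
      if h1 : (s.erase (s.min' h)).Nonempty then
        let a := s.min' h
        let b := (s.erase a).min' h1
        let B := insert a (insert b (nbrs E a ∪ nbrs E b))
        (B, E.filter fun e => e ⊆ B) :: blocks E fuel (s \ B)
      else [({s.min' h}, ∅)]
    else []

open Finset

variable {n : ℕ} {E : Finset (Finset (Fin n))}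

lemma pair_eq_of_mem (h2 : ∀ e ∈ E, e.card = 2) {e : Finset (Fin n)} (he : e ∈ E)
    {x y : Fin n} (hx : x ∈ e) (hy : y ∈ e) (hxy : x ≠ y) : e = {x, y} := by
  have hsub : ({x, y} : Finset (Fin n)) ⊆ e := by
    intro z hz; simp only [mem_insert, mem_singleton] at hz
    rcases hz with rfl | rfl <;> assumption
  exact (Finset.eq_of_subset_of_card_le hsub (by rw [h2 e he, Finset.card_pair hxy])).symm

lemma mem_nbrs_iff (h2 : ∀ e ∈ E, e.card = 2) {x y : Fin n} :
    y ∈ nbrs E x ↔ y ≠ x ∧ ({x, y} : Finset (Fin n)) ∈ E := by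
  simp only [nbrs, mem_filter, mem_univ, true_and]
  constructor
  · rintro ⟨hyx, e, heE, hxe, hye⟩
    exact ⟨hyx, by rwa [← pair_eq_of_mem h2 heE hxe hye (Ne.symm hyx)]⟩
  · rintro ⟨hyx, h⟩
    exact ⟨hyx, {x, y}, h, by simp, by simp⟩

lemma nbrs_eq_singleton (h2 : ∀ e ∈ E, e.card = 2)
    (hd : ∀ e ∈ E, ∀ f ∈ E, e ≠ f → Disjoint e f) {x y : Fin n} (hxy : x ≠ y)
    (h : ({x, y} : Finset (Fin n)) ∈ E) : nbrs E x = {y} := by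
  ext z
  rw [mem_nbrs_iff h2, mem_singleton]
  constructor
  · rintro ⟨hzx, hz⟩
    by_contra hne
    have hne2 : ({x, z} : Finset (Fin n)) ≠ {x, y} := by
      intro hh
      have : z ∈ ({x, y} : Finset (Fin n)) := by rw [← hh]; simp
      simp only [mem_insert, mem_singleton] at this
      rcases this with rfl | rfl
      · exact absurd rfl hzx
      · exact hne rfl
    have := hd _ hz _ h hne2
    exact absurd (Finset.disjoint_left.mp this (by simp : x ∈ ({x, z} : Finset (Fin n))) ) (by simp)
  · rintro rfl; exact ⟨hxy.symm, h⟩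

lemma nbrs_eq_empty {x : Fin n} (h : ∀ e ∈ E, x ∉ e) : nbrs E x = ∅ := by
  ext z
  simp only [nbrs, mem_filter, mem_univ, true_and, Finset.notMem_empty, iff_false]
  rintro ⟨_, e, heE, hxe, _⟩
  exact h e heE hxe

lemma not_mem_of_nbrs_empty (h2 : ∀ e ∈ E, e.card = 2) {x : Fin n}
    (h : nbrs E x = ∅) {e : Finset (Fin n)} (he : e ∈ E) : x ∉ e := by
  intro hxe
  obtain ⟨y, hy, hyx⟩ : ∃ y ∈ e, y ≠ x := by
    have := h2 e he
    have h1 : ({x} : Finset (Fin n)) ⊆ e := by simpa using hxe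
    by_contra hc
    push_neg at hc
    have : e ⊆ {x} := fun z hz => by simp [hc z hz]
    have := Finset.card_le_card this
    simp [h2 e he] at this
  have : y ∈ nbrs E x := by
    simp only [nbrs, mem_filter, mem_univ, true_and]
    exact ⟨hyx, e, he, hxe, hy⟩
  simp [h] at this

lemma nbrs_erase {x : Fin n} {e : Finset (Fin n)} (hx : x ∉ e) :
    nbrs (E.erase e) x = nbrs E x := by
  ext z
  simp only [nbrs, mem_filter, mem_univ, true_and, and_congr_right_iff]
  intro _
  constructor
  · rintro ⟨f, hf, h⟩; exact ⟨f, Finset.mem_of_mem_erase hf, h⟩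
  · rintro ⟨f, hf, hxf, hzf⟩
    exact ⟨f, Finset.mem_erase.mpr ⟨fun hh => hx (hh ▸ hxf), hf⟩, hxf, hzf⟩

lemma blocks_fst_congr {e : Finset (Fin n)} :
    ∀ fuel (t : Finset (Fin n)), (∀ x ∈ e, x ∉ t) →
      ((blocks E fuel t).map Prod.fst) = ((blocks (E.erase e) fuel t).map Prod.fst)
  | 0, t, _ => rfl
  | fuel + 1, t, hdisj => by
    by_cases ht : t.Nonempty
    · have hmin : t.min' ht ∉ e := fun hc => hdisj _ hc (t.min'_mem ht)
      by_cases h1 : (t.erase (t.min' ht)).Nonempty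
      · have hmin2 : (t.erase (t.min' ht)).min' h1 ∉ e := fun hc =>
          hdisj _ hc (Finset.mem_of_mem_erase ((t.erase (t.min' ht)).min'_mem h1))
        rw [blocks, blocks, dif_pos ht, dif_pos h1, dif_pos ht, dif_pos h1]
        simp only [List.map_cons, nbrs_erase hmin, nbrs_erase hmin2, List.cons.injEq,
          true_and]
        exact blocks_fst_congr fuel _ (fun x hx => fun hc => hdisj x hx (Finset.mem_sdiff.mp hc).1)
      · rw [blocks, blocks, dif_pos ht, dif_neg h1, dif_pos ht, dif_neg h1]
    · rw [blocks, blocks, dif_neg ht, dif_neg ht]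

section Blocks
variable {a b : Fin n}

lemma card_four {a b c d : Fin n} (hab : a ≠ b) (hac : a ≠ c) (hbc : b ≠ c)
    (had : a ≠ d) (hbd : b ≠ d) (hcd : c ≠ d) :
    ({a, b, c, d} : Finset (Fin n)).card = 4 := by
  rw [Finset.card_insert_of_notMem (by simp [hab, hac, had]),
    Finset.card_insert_of_notMem (by simp [hbc, hbd]),
    Finset.card_insert_of_notMem (by simp [hcd]), Finset.card_singleton]

lemma nbrs_cases (h2 : ∀ e ∈ E, e.card = 2)
    (hd : ∀ e ∈ E, ∀ f ∈ E, e ≠ f → Disjoint e f) (y : Fin n) :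
    nbrs E y = ∅ ∨ ∃ d, d ≠ y ∧ ({y, d} : Finset (Fin n)) ∈ E ∧ nbrs E y = {d} := by
  by_cases h : nbrs E y = ∅
  · exact Or.inl h
  · rw [← Finset.not_nonempty_iff_eq_empty, not_not] at h
    obtain ⟨d, hdm⟩ := h
    obtain ⟨hdy, hyd⟩ := (mem_nbrs_iff h2).mp hdm
    exact Or.inr ⟨d, hdy, hyd, nbrs_eq_singleton h2 hd (Ne.symm hdy) hyd⟩

lemma edges_share (hd : ∀ e ∈ E, ∀ f ∈ E, e ≠ f → Disjoint e f)
    {e f : Finset (Fin n)} (he : e ∈ E) (hf : f ∈ E) {x : Fin n}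
    (hx : x ∈ e) (hx' : x ∈ f) : e = f := by
  by_contra hne
  exact absurd hx' (Finset.disjoint_left.mp (hd e he f hf hne) hx)

lemma block_of_edge_a (h2 : ∀ e ∈ E, e.card = 2)
    (hd : ∀ e ∈ E, ∀ f ∈ E, e ≠ f → Disjoint e f) {c : Fin n}
    (hca : c ≠ a) (he : ({a, c} : Finset (Fin n)) ∈ E) (hb : nbrs E b = ∅) :
    insert a (insert b (nbrs E a ∪ nbrs E b)) = {a, b, c} := by
  rw [nbrs_eq_singleton h2 hd hca.symm he, hb]
  ext z; simp only [Finset.mem_insert, Finset.mem_union, Finset.mem_singleton,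
    Finset.notMem_empty]; tauto

lemma block_of_edge_b (h2 : ∀ e ∈ E, e.card = 2)
    (hd : ∀ e ∈ E, ∀ f ∈ E, e ≠ f → Disjoint e f) {c : Fin n}
    (hcb : c ≠ b) (he : ({b, c} : Finset (Fin n)) ∈ E) (ha : nbrs E a = ∅) :
    insert a (insert b (nbrs E a ∪ nbrs E b)) = {a, b, c} := by
  rw [nbrs_eq_singleton h2 hd hcb.symm he, ha]
  ext z; simp only [Finset.mem_insert, Finset.mem_union, Finset.mem_singleton,
    Finset.notMem_empty]; tauto

lemma card3_cases (h2 : ∀ e ∈ E, e.card = 2)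
    (hd : ∀ e ∈ E, ∀ f ∈ E, e ≠ f → Disjoint e f) (hab : a ≠ b)
    (hB : (insert a (insert b (nbrs E a ∪ nbrs E b))).card = 3) :
    ∃ c, c ≠ a ∧ c ≠ b ∧ nbrs E a ∪ nbrs E b = {c} ∧
      ((({a, c} : Finset (Fin n)) ∈ E ∧ nbrs E b = ∅) ∨
       (({b, c} : Finset (Fin n)) ∈ E ∧ nbrs E a = ∅)) := by
  rcases nbrs_cases h2 hd a with hNa | ⟨c, hca, hac, hNa⟩
  · rcases nbrs_cases h2 hd b with hNb | ⟨c, hcb, hbc, hNb⟩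
    · exfalso
      rw [hNa, hNb] at hB
      have h5 : insert a (insert b ((∅ : Finset (Fin n)) ∪ ∅)) = {a, b} := by
        ext z; simp
      rw [h5, Finset.card_pair hab] at hB; omega
    · have hca2 : c ≠ a := by
        rintro rfl
        exact not_mem_of_nbrs_empty h2 hNa hbc (by simp)
      refine ⟨c, hca2, hcb, ?_, Or.inr ⟨hbc, hNa⟩⟩
      rw [hNa, hNb, Finset.empty_union]
  · have hcb : c ≠ b := by
      intro h
      rw [h] at hac hNa
      have hNb : nbrs E b = {a} := nbrs_eq_singleton h2 hd hab.symm
        (by rw [Finset.pair_comm b a]; exact hac)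
      rw [hNa, hNb] at hB
      have h5 : insert a (insert b (({b} : Finset (Fin n)) ∪ {a})) = {a, b} := by
        ext z; simp only [Finset.mem_insert, Finset.mem_union, Finset.mem_singleton]
        try tauto
      rw [h5, Finset.card_pair hab] at hB; omega
    have hNb : nbrs E b = ∅ := by
      rcases nbrs_cases h2 hd b with hNb | ⟨d, hdb, hbd, hNb⟩
      · exact hNb
      exfalso
      have hda : d ≠ a := by
        intro h
        have h6 : ({b, d} : Finset (Fin n)) = {a, c} :=
          edges_share (x := a) hd hbd hac (by simp [h]) (by simp)
        have h7 : b ∈ ({a, c} : Finset (Fin n)) := by rw [← h6]; simp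
        simp only [Finset.mem_insert, Finset.mem_singleton] at h7
        rcases h7 with h7 | h7
        · exact hab h7.symm
        · exact hcb (h7.symm)
      have hdc : d ≠ c := by
        intro h
        have h6 : ({b, d} : Finset (Fin n)) = {a, c} :=
          edges_share (x := c) hd hbd hac (by simp [h]) (by simp)
        have h7 : b ∈ ({a, c} : Finset (Fin n)) := by rw [← h6]; simp
        simp only [Finset.mem_insert, Finset.mem_singleton] at h7
        rcases h7 with h7 | h7
        · exact hab h7.symm
        · exact hcb (h7.symm)
      rw [hNa, hNb] at hB
      have h5 : insert a (insert b (({c} : Finset (Fin n)) ∪ {d})) = {a, b, c, d} := by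
        ext z; simp only [Finset.mem_insert, Finset.mem_union, Finset.mem_singleton]
        try tauto
      rw [h5, card_four hab (Ne.symm hca) (Ne.symm hcb) (Ne.symm hda) (Ne.symm hdb)
        (Ne.symm hdc)] at hB
      omega
    refine ⟨c, hca, hcb, ?_, Or.inl ⟨hac, hNb⟩⟩
    rw [hNa, hNb, Finset.union_empty]

end Blocks

lemma blocks_empty (E : Finset (Finset (Fin n))) (fuel : ℕ) :
    blocks E fuel (∅ : Finset (Fin n)) = [] := by
  cases fuel with
  | zero => rfl
  | succ fuel => rw [blocks, dif_neg (by simp)]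

lemma blocks_succ {E : Finset (Finset (Fin n))} {fuel : ℕ} {s : Finset (Fin n)}
    (hs : s.Nonempty) (h1 : (s.erase (s.min' hs)).Nonempty) {B : Finset (Fin n)}
    (hB : B = insert (s.min' hs) (insert ((s.erase (s.min' hs)).min' h1)
      (nbrs E (s.min' hs) ∪ nbrs E ((s.erase (s.min' hs)).min' h1)))) :
    blocks E (fuel + 1) s = (B, E.filter fun e => e ⊆ B) :: blocks E fuel (s \ B) := by
  subst hB; rw [blocks, dif_pos hs, dif_pos h1]

open scoped Classical in
noncomputable def S (fuel : ℕ) (s : Finset (Fin n)) : Finset (Finset (Finset (Fin n))) :=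
  Finset.univ.filter fun E =>
    (∀ e ∈ E, e.card = 2) ∧ (∀ e ∈ E, ∀ f ∈ E, e ≠ f → Disjoint e f) ∧
    (∀ e ∈ E, e ⊆ s) ∧
    (((blocks E fuel s).map fun p => p.1.card : List ℕ) : Multiset ℕ) =
      Multiset.replicate (s.card / 3) 3

lemma mem_S {fuel : ℕ} {s : Finset (Fin n)} {E : Finset (Finset (Fin n))} :
    E ∈ S fuel s ↔
      (∀ e ∈ E, e.card = 2) ∧ (∀ e ∈ E, ∀ f ∈ E, e ≠ f → Disjoint e f) ∧
      (∀ e ∈ E, e ⊆ s) ∧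
      (((blocks E fuel s).map fun p => p.1.card : List ℕ) : Multiset ℕ) =
        Multiset.replicate (s.card / 3) 3 := by
  simp [S]

lemma S_empty (fuel : ℕ) : S (n := n) fuel ∅ = {∅} := by
  ext E
  rw [mem_S, Finset.mem_singleton]
  constructor
  · rintro ⟨h2, _, hsupp, _⟩
    by_contra hne
    obtain ⟨e, he⟩ := Finset.nonempty_iff_ne_empty.mpr hne
    have h0 : e = ∅ := Finset.subset_empty.mp (hsupp e he)
    have := h2 e he
    rw [h0] at this; simp at this
  · rintro rfl
    refine ⟨by simp, by simp, by simp, ?_⟩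
    rw [blocks_empty]; simp

def edg (a b c : Fin n) (i : Bool) : Finset (Fin n) :=
  if i then {b, c} else {a, c}

lemma edg_subset {a b c : Fin n} (i : Bool) : edg a b c i ⊆ ({a, b, c} : Finset (Fin n)) := by
  cases i <;> intro x hx <;> simp only [edg, Bool.false_eq_true, if_true, if_false,
    Finset.mem_insert, Finset.mem_singleton] at hx <;> rcases hx with rfl | rfl <;> simp

lemma card_three {a b c : Fin n} (hab : a ≠ b) (hac : a ≠ c) (hbc : b ≠ c) :
    ({a, b, c} : Finset (Fin n)).card = 3 := by
  rw [Finset.card_insert_of_notMem (by simp [hab, hac]),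
    Finset.card_insert_of_notMem (by simp [hbc]), Finset.card_singleton]

lemma sdiff_triple (s : Finset (Fin n)) (a b c : Fin n) :
    s \ ({a, b, c} : Finset (Fin n)) = ((s.erase a).erase b).erase c := by
  ext x
  simp only [Finset.mem_sdiff, Finset.mem_erase, Finset.mem_insert, Finset.mem_singleton]
  tauto
lemma mem_S_succ_elim {fuel : ℕ} {s : Finset (Fin n)} (hs : s.Nonempty)
    {a b : Fin n} (ha : a = s.min' hs) (h1 : (s.erase a).Nonempty)
    (hb : b = (s.erase a).min' h1) {E : Finset (Finset (Fin n))}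
    (hE : E ∈ S (fuel + 1) s) :
    ∃ c, nbrs E a ∪ nbrs E b = {c} ∧ c ∈ (s.erase a).erase b ∧
      edg a b c (decide (nbrs E a = ∅)) ∈ E ∧
      E.erase (edg a b c (decide (nbrs E a = ∅))) ∈
        S fuel (((s.erase a).erase b).erase c) := by
  subst ha; subst hb
  set a := s.min' hs with ha
  set b := (s.erase a).min' h1 with hb
  obtain ⟨h2, hd, hsupp, hmul⟩ := mem_S.mp hE
  have hbea : b ∈ s.erase a := (s.erase a).min'_mem h1
  have hba : b ≠ a := (Finset.mem_erase.mp hbea).1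
  have hbs : b ∈ s := (Finset.mem_erase.mp hbea).2
  have hab : a ≠ b := hba.symm
  have has : a ∈ s := s.min'_mem hs
  have hblocks := blocks_succ (E := E) (fuel := fuel) hs h1
    (B := insert a (insert b (nbrs E a ∪ nbrs E b))) rfl
  rw [hblocks, List.map_cons, ← Multiset.cons_coe, Multiset.eq_replicate] at hmul
  obtain ⟨hlen, hall⟩ := hmul
  have hB3 : (insert a (insert b (nbrs E a ∪ nbrs E b))).card = 3 :=
    hall _ (Multiset.mem_cons_self _ _)
  obtain ⟨c, hca, hcb, hun, hcase⟩ := card3_cases h2 hd hab hB3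
  have hBabc : insert a (insert b (nbrs E a ∪ nbrs E b)) = {a, b, c} := by
    rcases hcase with ⟨he, hnb⟩ | ⟨he, hna⟩
    · exact block_of_edge_a h2 hd hca he hnb
    · exact block_of_edge_b h2 hd hcb he hna
  have hcs : c ∈ s := by
    rcases hcase with ⟨he, _⟩ | ⟨he, _⟩
    · exact hsupp _ he (by simp)
    · exact hsupp _ he (by simp)
  have hct : c ∈ (s.erase a).erase b := by
    rw [Finset.mem_erase, Finset.mem_erase]; exact ⟨hcb, hca, hcs⟩
  -- the bundle: the matched edge e0
  obtain ⟨e0, he0E, he0sub, hdec, hother⟩ :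
      ∃ e0, e0 ∈ E ∧ e0 ⊆ ({a, b, c} : Finset (Fin n)) ∧
        edg a b c (decide (nbrs E a = ∅)) = e0 ∧
        ∀ f ∈ E, f ≠ e0 → a ∉ f ∧ b ∉ f ∧ c ∉ f := by
    rcases hcase with ⟨he, hnb⟩ | ⟨he, hna⟩
    · refine ⟨{a, c}, he, by intro x hx; simp at hx; rcases hx with rfl | rfl <;> simp, ?_, ?_⟩
      · have hNa : nbrs E a = {c} := nbrs_eq_singleton h2 hd (Ne.symm hca) he
        have : decide (nbrs E a = ∅) = false :=
          decide_eq_false (by rw [hNa]; exact Finset.singleton_ne_empty c)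
        rw [this]; simp [edg]
      · intro f hf hfne
        refine ⟨fun hmem => hfne (edges_share hd hf he hmem (by simp)),
          not_mem_of_nbrs_empty h2 hnb hf,
          fun hmem => hfne (edges_share hd hf he hmem (by simp))⟩
    · refine ⟨{b, c}, he, by intro x hx; simp at hx; rcases hx with rfl | rfl <;> simp, ?_, ?_⟩
      · have : decide (nbrs E a = ∅) = true := decide_eq_true hna
        rw [this]; simp [edg]
      · intro f hf hfne
        refine ⟨not_mem_of_nbrs_empty h2 hna hf,
          fun hmem => hfne (edges_share hd hf he hmem (by simp)),
          fun hmem => hfne (edges_share hd hf he hmem (by simp))⟩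
  refine ⟨c, hun, hct, hdec ▸ he0E, ?_⟩
  rw [hdec]
  -- show E.erase e0 ∈ S fuel t
  have hcard_t : (((s.erase a).erase b).erase c).card = s.card - 3 := by
    rw [Finset.card_erase_of_mem hct, Finset.card_erase_of_mem hbea,
      Finset.card_erase_of_mem has]
    omega
  have hs3 : 3 ≤ s.card := by
    have hsub : ({a, b, c} : Finset (Fin n)) ⊆ s := by
      intro x hx; simp only [Finset.mem_insert, Finset.mem_singleton] at hx
      rcases hx with rfl | rfl | rfl <;> assumption
    calc 3 = ({a, b, c} : Finset (Fin n)).card :=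
          (card_three hab (Ne.symm hca) (Ne.symm hcb)).symm
      _ ≤ s.card := Finset.card_le_card hsub
  rw [mem_S]
  refine ⟨fun e he => h2 e (Finset.mem_of_mem_erase he),
    fun e he f hf => hd e (Finset.mem_of_mem_erase he) f (Finset.mem_of_mem_erase hf),
    ?_, ?_⟩
  · intro e he x hx
    have heE := Finset.mem_of_mem_erase he
    have hne := (Finset.mem_erase.mp he).1
    obtain ⟨hna', hnb', hnc'⟩ := hother e heE hne
    rw [Finset.mem_erase, Finset.mem_erase, Finset.mem_erase]
    refine ⟨fun h => hnc' ?_, fun h => hnb' ?_, fun h => hna' ?_, hsupp e heE hx⟩ <;>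
      (rw [h] at hx; exact hx)
  · -- the multiset condition
    have hdisj : ∀ x ∈ e0, x ∉ ((s.erase a).erase b).erase c := by
      intro x hx
      have := he0sub hx
      simp only [Finset.mem_insert, Finset.mem_singleton] at this
      rcases this with rfl | rfl | rfl <;>
        simp [Finset.mem_erase, hca, hcb]
    have hfst := blocks_fst_congr (E := E) (e := e0) fuel (((s.erase a).erase b).erase c) hdisj
    have hmapeq : ((blocks (E.erase e0) fuel (((s.erase a).erase b).erase c)).map
        fun p => p.1.card) =
        ((blocks E fuel (((s.erase a).erase b).erase c)).map fun p => p.1.card) := by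
      have l1 : ((blocks E fuel (((s.erase a).erase b).erase c)).map fun p => p.1.card) =
          ((blocks E fuel (((s.erase a).erase b).erase c)).map Prod.fst).map Finset.card := by
        simp [List.map_map]
      have l2 : ((blocks (E.erase e0) fuel (((s.erase a).erase b).erase c)).map
          fun p => p.1.card) =
          ((blocks (E.erase e0) fuel (((s.erase a).erase b).erase c)).map Prod.fst).map
            Finset.card := by
        simp [List.map_map]
      rw [l1, l2, hfst]
    rw [hmapeq]
    have htail : (((blocks E fuel (s \ insert a (insert b (nbrs E a ∪ nbrs E b)))).map
        fun p => p.1.card : List ℕ) : Multiset ℕ) =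
        Multiset.replicate (s.card / 3 - 1) 3 := by
      rw [Multiset.eq_replicate]
      constructor
      · have := hlen
        rw [Multiset.card_cons] at this
        simp only [Multiset.coe_card, List.length_map] at this ⊢
        omega
      · exact fun x hx => hall x (Multiset.mem_cons_of_mem hx)
    rw [hBabc, sdiff_triple] at htail
    rw [htail, hcard_t]
    congr 1
    omega

lemma insert_mem_S_succ {fuel : ℕ} {s : Finset (Fin n)} (hs : s.Nonempty)
    {a b : Fin n} (ha : a = s.min' hs) (h1 : (s.erase a).Nonempty)
    (hb : b = (s.erase a).min' h1) {c : Fin n} (hc : c ∈ (s.erase a).erase b)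
    (i : Bool) {E' : Finset (Finset (Fin n))}
    (hE' : E' ∈ S fuel (((s.erase a).erase b).erase c)) :
    insert (edg a b c i) E' ∈ S (fuel + 1) s ∧
    nbrs (insert (edg a b c i) E') a ∪ nbrs (insert (edg a b c i) E') b = {c} ∧
    decide (nbrs (insert (edg a b c i) E') a = ∅) = i ∧
    (insert (edg a b c i) E').erase (edg a b c i) = E' := by
  subst ha; subst hb
  set a := s.min' hs with ha
  set b := (s.erase a).min' h1 with hb
  set t := ((s.erase a).erase b).erase c with ht
  obtain ⟨h2', hd', hsupp', hmul'⟩ := mem_S.mp hE'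
  have hbea : b ∈ s.erase a := (s.erase a).min'_mem h1
  have hba : b ≠ a := (Finset.mem_erase.mp hbea).1
  have hbs : b ∈ s := (Finset.mem_erase.mp hbea).2
  have hab : a ≠ b := hba.symm
  have has : a ∈ s := s.min'_mem hs
  have hcb : c ≠ b := (Finset.mem_erase.mp hc).1
  have hca : c ≠ a := (Finset.mem_erase.mp (Finset.mem_erase.mp hc).2).1
  have hcs : c ∈ s := (Finset.mem_erase.mp (Finset.mem_erase.mp hc).2).2
  set E := insert (edg a b c i) E' with hEdef
  -- basic facts about the new edge
  have hedgE : edg a b c i ∈ E := Finset.mem_insert_self _ _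
  have hedg_card : (edg a b c i).card = 2 := by
    cases i <;> simp only [edg, if_true, if_false, Bool.false_eq_true]
    · exact Finset.card_pair (Ne.symm hca)
    · exact Finset.card_pair (Ne.symm hcb)
  have hedg_sub : edg a b c i ⊆ ({a, b, c} : Finset (Fin n)) := edg_subset i
  have hnotint : ∀ x ∈ ({a, b, c} : Finset (Fin n)), x ∉ t := by
    intro x hx
    simp only [Finset.mem_insert, Finset.mem_singleton] at hx
    rcases hx with rfl | rfl | rfl <;> simp [ht, Finset.mem_erase, hca, hcb]
  have hedg_notin : edg a b c i ∉ E' := by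
    intro hmem
    have hsub := hsupp' _ hmem
    have : a ∈ edg a b c i ∨ b ∈ edg a b c i := by
      cases i <;> simp [edg]
    rcases this with h | h
    · exact hnotint a (by simp) (hsub h)
    · exact hnotint b (by simp) (hsub h)
  have hdisjE' : ∀ f ∈ E', Disjoint (edg a b c i) f := by
    intro f hf
    rw [Finset.disjoint_left]
    intro x hx hxf
    exact hnotint x (hedg_sub hx) (hsupp' f hf hxf)
  have h2 : ∀ e ∈ E, e.card = 2 := by
    intro e he
    rcases Finset.mem_insert.mp he with rfl | he'
    · exact hedg_card
    · exact h2' e he'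
  have hd : ∀ e ∈ E, ∀ f ∈ E, e ≠ f → Disjoint e f := by
    intro e he f hf hne
    rcases Finset.mem_insert.mp he with rfl | he' <;>
      rcases Finset.mem_insert.mp hf with rfl | hf'
    · exact absurd rfl hne
    · exact hdisjE' f hf'
    · exact (hdisjE' e he').symm
    · exact hd' e he' f hf' hne
  have hsupp : ∀ e ∈ E, e ⊆ s := by
    intro e he
    rcases Finset.mem_insert.mp he with rfl | he'
    · intro x hx
      have := hedg_sub hx
      simp only [Finset.mem_insert, Finset.mem_singleton] at this
      rcases this with rfl | rfl | rfl <;> assumption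
    · intro x hx
      have := hsupp' e he' hx
      exact Finset.mem_of_mem_erase (Finset.mem_of_mem_erase (Finset.mem_of_mem_erase this))
  have herase : E.erase (edg a b c i) = E' := Finset.erase_insert hedg_notin
  have hcard_t : t.card = s.card - 3 := by
    rw [ht, Finset.card_erase_of_mem hc, Finset.card_erase_of_mem hbea,
      Finset.card_erase_of_mem has]
    omega
  have hs3 : 3 ≤ s.card := by
    have hsub : ({a, b, c} : Finset (Fin n)) ⊆ s := by
      intro x hx; simp only [Finset.mem_insert, Finset.mem_singleton] at hx
      rcases hx with rfl | rfl | rfl <;> assumption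
    calc 3 = ({a, b, c} : Finset (Fin n)).card :=
          (card_three hab (Ne.symm hca) (Ne.symm hcb)).symm
      _ ≤ s.card := Finset.card_le_card hsub
  have hmemS : insert a (insert b (nbrs E a ∪ nbrs E b)) = {a, b, c} →
      E ∈ S (fuel + 1) s := by
    intro hBabc
    rw [mem_S]
    refine ⟨h2, hd, hsupp, ?_⟩
    rw [blocks_succ hs h1 rfl, List.map_cons, ← Multiset.cons_coe]
    have hfst := blocks_fst_congr (E := E) (e := edg a b c i) fuel t
      (fun x hx => hnotint x (hedg_sub hx))
    rw [herase] at hfst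
    have hmapeq : ((blocks E fuel t).map fun p => p.1.card) =
        ((blocks E' fuel t).map fun p => p.1.card) := by
      have l1 : ((blocks E fuel t).map fun p => p.1.card) =
          ((blocks E fuel t).map Prod.fst).map Finset.card := by simp [List.map_map]
      have l2 : ((blocks E' fuel t).map fun p => p.1.card) =
          ((blocks E' fuel t).map Prod.fst).map Finset.card := by simp [List.map_map]
      rw [l1, l2, hfst]
    have hgoal : (s \ insert a (insert b (nbrs E a ∪ nbrs E b))) = t := by
      rw [hBabc, ht, sdiff_triple]
    rw [hgoal, hBabc, card_three hab (Ne.symm hca) (Ne.symm hcb), hmapeq, hmul',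
      ← Multiset.replicate_succ]
    congr 1
    omega
  cases i with
  | false =>
    have hacE : ({a, c} : Finset (Fin n)) ∈ E := by
      have := hedgE
      simp only [edg, Bool.false_eq_true, if_false] at this
      exact this
    have hNb : nbrs E b = ∅ := by
      apply nbrs_eq_empty
      intro f hf hbf
      rcases Finset.mem_insert.mp hf with rfl | hf'
      · have := hedg_sub hbf
        simp only [Finset.mem_insert, Finset.mem_singleton] at this
        have hb2 : b ∈ ({a, c} : Finset (Fin n)) := by
          simpa [edg] using hbf
        simp only [Finset.mem_insert, Finset.mem_singleton] at hb2
        rcases hb2 with h | h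
        · exact hba h
        · exact hcb h.symm
      · exact hnotint b (by simp) (hsupp' f hf' hbf)
    have hNa : nbrs E a = {c} := nbrs_eq_singleton h2 hd (Ne.symm hca) hacE
    exact ⟨hmemS (block_of_edge_a h2 hd hca hacE hNb),
      by rw [hNa, hNb, Finset.union_empty],
      by rw [hNa]; exact decide_eq_false (Finset.singleton_ne_empty c), herase⟩
  | true =>
    have hbcE : ({b, c} : Finset (Fin n)) ∈ E := by
      have := hedgE
      simp only [edg, if_true] at this
      exact this
    have hNa : nbrs E a = ∅ := by
      apply nbrs_eq_empty
      intro f hf haf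
      rcases Finset.mem_insert.mp hf with rfl | hf'
      · have ha2 : a ∈ ({b, c} : Finset (Fin n)) := by
          simpa [edg] using haf
        simp only [Finset.mem_insert, Finset.mem_singleton] at ha2
        rcases ha2 with h | h
        · exact hab h
        · exact hca h.symm
      · exact hnotint a (by simp) (hsupp' f hf' haf)
    have hNb : nbrs E b = {c} := nbrs_eq_singleton h2 hd (Ne.symm hcb) hbcE
    exact ⟨hmemS (block_of_edge_b h2 hd hcb hbcE hNa),
      by rw [hNa, hNb, Finset.empty_union],
      by rw [hNa]; exact decide_eq_true rfl, herase⟩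

lemma arith_step (m K : ℕ) (hm : m = 3 * (K + 1)) :
    (m - 2) * (2 * (2 ^ K * ∏ j ∈ Finset.Icc 1 K, (m - 3 - 3 * j + 1))) =
      2 ^ (K + 1) * ∏ j ∈ Finset.Icc 1 (K + 1), (m - 3 * j + 1) := by
  rw [← Finset.Ico_add_one_right_eq_Icc, ← Finset.Ico_add_one_right_eq_Icc, Finset.prod_Ico_eq_prod_range,
    Finset.prod_Ico_eq_prod_range]
  rw [show K + 1 - 1 = K by omega, show K + 1 + 1 - 1 = K + 1 by omega,
    Finset.prod_range_succ']
  have h1 : ∏ j ∈ Finset.range K, (m - 3 - 3 * (1 + j) + 1) =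
      ∏ j ∈ Finset.range K, (m - 3 * (1 + (j + 1)) + 1) :=
    Finset.prod_congr rfl (fun j _ => by omega)
  have h2 : m - 3 * (1 + 0) + 1 = m - 2 := by omega
  rw [h1, h2, pow_succ]
  ring

lemma main_count : ∀ (fuel : ℕ) (s : Finset (Fin n)), s.card ≤ 3 * fuel →
    s.card % 3 = 0 →
    (S fuel s).card = 2 ^ (s.card / 3) * ∏ j ∈ Finset.Icc 1 (s.card / 3), (s.card - 3 * j + 1) := by
  intro fuel
  induction fuel with
  | zero =>
    intro s hle h3
    have hse : s = ∅ := Finset.card_eq_zero.mp (by omega)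
    subst hse
    rw [S_empty]
    simp
  | succ fuel ih =>
    intro s hle h3
    rcases s.eq_empty_or_nonempty with rfl | hs
    · rw [S_empty]; simp
    · have hpos : 0 < s.card := Finset.card_pos.mpr hs
      have h3le : 3 ≤ s.card := by omega
      set a := s.min' hs with ha
      have has : a ∈ s := s.min'_mem hs
      have h1 : (s.erase a).Nonempty := by
        rw [← Finset.card_pos, Finset.card_erase_of_mem has]; omega
      set b := (s.erase a).min' h1 with hb
      have hbea : b ∈ s.erase a := (s.erase a).min'_mem h1
      set D := (s.erase a).erase b with hD
      have hcardD : D.card = s.card - 2 := by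
        rw [hD, Finset.card_erase_of_mem hbea, Finset.card_erase_of_mem has]
        omega
      set T := D.sigma (fun c => (Finset.univ : Finset Bool) ×ˢ S fuel (D.erase c)) with hT
      have hbij : (S (fuel + 1) s).card = T.card := by
        apply Finset.card_bij (i := fun E hE =>
          ⟨(mem_S_succ_elim hs ha h1 hb hE).choose,
            (decide (nbrs E a = ∅),
             E.erase (edg a b (mem_S_succ_elim hs ha h1 hb hE).choose
               (decide (nbrs E a = ∅))))⟩)
        · intro E hE
          obtain ⟨hun, hcD, hedge, hmem⟩ := (mem_S_succ_elim hs ha h1 hb hE).choose_spec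
          rw [hT, Finset.mem_sigma, Finset.mem_product]
          exact ⟨hcD, Finset.mem_univ _, hmem⟩
        · intro E1 hE1 E2 hE2 heq
          obtain ⟨hun1, hcD1, hedge1, hmem1⟩ := (mem_S_succ_elim hs ha h1 hb hE1).choose_spec
          obtain ⟨hun2, hcD2, hedge2, hmem2⟩ := (mem_S_succ_elim hs ha h1 hb hE2).choose_spec
          obtain ⟨hc, heq2⟩ := Sigma.mk.inj_iff.mp heq
          obtain ⟨hi, hEr⟩ := Prod.mk_inj.mp (eq_of_heq heq2)
          have e1 : E1 = insert (edg a b (mem_S_succ_elim hs ha h1 hb hE1).choose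
              (decide (nbrs E1 a = ∅))) (E1.erase (edg a b (mem_S_succ_elim hs ha h1 hb hE1).choose
              (decide (nbrs E1 a = ∅)))) := (Finset.insert_erase hedge1).symm
          have e2 : E2 = insert (edg a b (mem_S_succ_elim hs ha h1 hb hE2).choose
              (decide (nbrs E2 a = ∅))) (E2.erase (edg a b (mem_S_succ_elim hs ha h1 hb hE2).choose
              (decide (nbrs E2 a = ∅)))) := (Finset.insert_erase hedge2).symm
          rw [e1, e2, hEr, hc, hi]
        · rintro ⟨c, i, E'⟩ hp
          rw [hT, Finset.mem_sigma, Finset.mem_product] at hp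
          obtain ⟨hcD, -, hE'⟩ := hp
          obtain ⟨hmem, hun, hdec, herase⟩ := insert_mem_S_succ hs ha h1 hb hcD i hE'
          refine ⟨insert (edg a b c i) E', hmem, ?_⟩
          obtain ⟨hun', hcD', hedge', hmem'⟩ :=
            (mem_S_succ_elim hs ha h1 hb hmem).choose_spec
          have hcc : (mem_S_succ_elim hs ha h1 hb hmem).choose = c := by
            have := hun'.symm.trans hun
            exact Finset.singleton_injective this
          rw [Sigma.mk.inj_iff]
          refine ⟨hcc, heq_of_eq ?_⟩
          rw [Prod.mk_inj]
          refine ⟨hdec, ?_⟩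
          rw [hcc, hdec, herase]
      rw [hbij, hT, Finset.card_sigma]
      have hterm : ∀ c ∈ D, ((Finset.univ : Finset Bool) ×ˢ S fuel (D.erase c)).card =
          2 * (2 ^ ((s.card - 3) / 3) *
            ∏ j ∈ Finset.Icc 1 ((s.card - 3) / 3), (s.card - 3 - 3 * j + 1)) := by
        intro c hc
        have hcardDc : (D.erase c).card = s.card - 3 := by
          rw [Finset.card_erase_of_mem hc, hcardD]; omega
        rw [Finset.card_product, Finset.card_univ, Fintype.card_bool,
          ih (D.erase c) (by omega) (by omega), hcardDc]
      rw [Finset.sum_congr rfl hterm, Finset.sum_const, smul_eq_mul, hcardD]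
      have hK : ∃ K, s.card / 3 = K + 1 := ⟨s.card / 3 - 1, by omega⟩
      obtain ⟨K, hKeq⟩ := hK
      have hm : s.card = 3 * (K + 1) := by omega
      have hK2 : (s.card - 3) / 3 = K := by omega
      rw [hK2, hKeq]
      exact arith_step s.card K hm

theorem count_all_blocks_of_size_three (n : ℕ) (h3 : n % 3 = 0) :
    ((Finset.univ : Finset (Finset (Finset (Fin n)))).filter fun E =>
        (∀ e ∈ E, e.card = 2) ∧
        (∀ e ∈ E, ∀ f ∈ E, e ≠ f → Disjoint e f) ∧
        (((blocks E n Finset.univ).map fun b => b.1.card : List ℕ) : Multiset ℕ) =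
          Multiset.replicate (n / 3) 3).card =
      2 ^ (n / 3) * ∏ j ∈ Finset.Icc 1 (n / 3), (n - 3 * j + 1) := by
  have hcard : (Finset.univ : Finset (Fin n)).card = n := by
    rw [Finset.card_univ, Fintype.card_fin]
  have hset : ((Finset.univ : Finset (Finset (Finset (Fin n)))).filter fun E =>
        (∀ e ∈ E, e.card = 2) ∧
        (∀ e ∈ E, ∀ f ∈ E, e ≠ f → Disjoint e f) ∧
        (((blocks E n Finset.univ).map fun b => b.1.card : List ℕ) : Multiset ℕ) =
          Multiset.replicate (n / 3) 3) = S n Finset.univ := by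
    ext E
    rw [mem_S]
    simp only [Finset.mem_filter, Finset.mem_univ, true_and, hcard]
    constructor
    · rintro ⟨x, y, z⟩; exact ⟨x, y, fun e _ => Finset.subset_univ e, z⟩
    · rintro ⟨x, y, _, z⟩; exact ⟨x, y, z⟩
  rw [hset, main_count n Finset.univ (by omega) (by rw [hcard]; exact h3), hcard]
end
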